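/- Let n, d be natural numbers with 1 ≤ n and 1 ≤ d, and let ρ be a positive semidefinite complex matrix of trace 1 indexed by Fin n → Fin d which is unitarily invariant, i.e. for every unitary matrix U indexed by Fin d, U^{⊗n} * ρ * (U^{⊗n})ᴴ = ρ, where U^{⊗n} is the matrix with entries (U^{⊗n}) a b = ∏_{m : Fin n} U (a m) (b m). Then there exist a finite index set, nonnegative real numbers r_i, and nonzero subspaces W_i of the Euclidean space ℂ^{(Fin n → Fin d)} such that: each W_i is invariant under the linear map induced by U^{⊗n} for every unitary U indexed by Fin d; each W_i is minimal with this property (it contains no nonzero proper subspace invariant under all such U^{⊗n}); and ρ equals ∑_i r_i · P_i, where P_i is the matrix of the orthogonal projection onto W_i. -/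

import Mathlib

open Matrix ComplexOrder

/-- The `n`-th tensor power of a matrix `U` indexed by `ι`: the matrix indexed by
`Fin n → ι` with entries `(U^{⊗n}) a b = ∏ m, U (a m) (b m)`. -/
noncomputable def tensorPow {ι : Type*} [Fintype ι] (n : ℕ) (U : Matrix ι ι ℂ) :
    Matrix (Fin n → ι) (Fin n → ι) ℂ :=
  Matrix.of fun a b => ∏ m : Fin n, U (a m) (b m)

/-- The matrix (in the standard basis) of the orthogonal projection onto a subspace `W`
of the Euclidean space `ℂ^ι`. -/
noncomputable def projMatrix {ι : Type*} [Fintype ι] [DecidableEq ι]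
    (W : Submodule ℂ (EuclideanSpace ℂ ι)) : Matrix ι ι ℂ :=
  Matrix.toEuclideanLin.symm ((W.subtypeL.comp W.orthogonalProjection).toLinearMap)

namespace WernerAux

local notation "⟪" x ", " y "⟫" => inner (𝕜 := ℂ) x y

variable {n d : ℕ}

lemma tensorPow_conjTranspose (U : Matrix (Fin d) (Fin d) ℂ) :
    (tensorPow n U)ᴴ = tensorPow n Uᴴ := by
  ext a b
  simp [tensorPow, Matrix.conjTranspose_apply, star_prod]

lemma tensorPow_mul (A B : Matrix (Fin d) (Fin d) ℂ) :
    tensorPow n (A * B) = tensorPow n A * tensorPow n B := by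
  ext a b
  simp only [tensorPow, Matrix.mul_apply, Matrix.of_apply]
  rw [Fintype.prod_sum (fun m k => A (a m) k * B k (b m))]
  simp [Finset.prod_mul_distrib]

lemma tensorPow_one : tensorPow n (1 : Matrix (Fin d) (Fin d) ℂ) = 1 := by
  ext a b
  by_cases h : a = b
  · subst h; simp [tensorPow, Matrix.one_apply]
  · obtain ⟨m, hm⟩ : ∃ m, a m ≠ b m := by
      by_contra h'; push_neg at h'; exact h (funext h')
    simp only [tensorPow, Matrix.of_apply, Matrix.one_apply_ne h]
    exact Finset.prod_eq_zero (Finset.mem_univ m) (by simp [Matrix.one_apply, hm])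

lemma toEuclideanLin_mul {ι : Type*} [Fintype ι] [DecidableEq ι] (A B : Matrix ι ι ℂ) :
    Matrix.toEuclideanLin (A * B) = (Matrix.toEuclideanLin A) ∘ₗ (Matrix.toEuclideanLin B) := by
  rw [Matrix.toEuclideanLin_eq_toLin]
  exact Matrix.toLin_mul _ _ _ A B

/-- Invariance of a subspace under all `U^{⊗n}` for unitary `U`. -/
def Inv (n d : ℕ) (W : Submodule ℂ (EuclideanSpace ℂ (Fin n → Fin d))) : Prop :=
  ∀ U ∈ Matrix.unitaryGroup (Fin d) ℂ,
    ∀ x ∈ W, Matrix.toEuclideanLin (tensorPow n U) x ∈ W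

lemma inv_orthogonal {W : Submodule ℂ (EuclideanSpace ℂ (Fin n → Fin d))}
    (hW : Inv n d W) : Inv n d Wᗮ := by
  intro U hU x hx
  rw [Submodule.mem_orthogonal]
  intro w hw
  have h1 : LinearMap.adjoint (Matrix.toEuclideanLin (tensorPow n U)) w ∈ W := by
    rw [← Matrix.toEuclideanLin_conjTranspose_eq_adjoint, tensorPow_conjTranspose]
    refine hW Uᴴ ?_ w hw
    rw [← Matrix.star_eq_conjTranspose]
    exact Unitary.star_mem hU
  calc ⟪w, Matrix.toEuclideanLin (tensorPow n U) x⟫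
      = ⟪LinearMap.adjoint (Matrix.toEuclideanLin (tensorPow n U)) w, x⟫ :=
        (LinearMap.adjoint_inner_left _ _ _).symm
    _ = 0 := (Submodule.mem_orthogonal W x).1 hx _ h1

/-- The orthogonal projection onto `W` as a plain linear map on the ambient space. -/
noncomputable def projL {ι : Type*} [Fintype ι]
    (W : Submodule ℂ (EuclideanSpace ℂ ι)) :
    EuclideanSpace ℂ ι →ₗ[ℂ] EuclideanSpace ℂ ι :=
  (W.subtypeL.comp (Submodule.orthogonalProjectionOnto W)).toLinearMap

lemma projL_apply {ι : Type*} [Fintype ι] (W : Submodule ℂ (EuclideanSpace ℂ ι))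
    (x : EuclideanSpace ℂ ι) : projL W x = (Submodule.orthogonalProjectionOnto W x : EuclideanSpace ℂ ι) := rfl

lemma projL_mem {ι : Type*} [Fintype ι] (W : Submodule ℂ (EuclideanSpace ℂ ι))
    (x : EuclideanSpace ℂ ι) : projL W x ∈ W := (Submodule.orthogonalProjectionOnto W x).2

lemma projL_decomp {ι : Type*} [Fintype ι]
    {W V : Submodule ℂ (EuclideanSpace ℂ ι)} (h : W ≤ V) (x : EuclideanSpace ℂ ι) :
    (Submodule.orthogonalProjectionOnto V x : EuclideanSpace ℂ ι)
      = (Submodule.orthogonalProjectionOnto W x : EuclideanSpace ℂ ι)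
        + (Submodule.orthogonalProjectionOnto (Wᗮ ⊓ V) x : EuclideanSpace ℂ ι) := by
  apply Submodule.eq_starProjection_of_mem_of_inner_eq_zero
  · exact V.add_mem (h (Submodule.orthogonalProjectionOnto W x).2)
      ((inf_le_right : Wᗮ ⊓ V ≤ V) (Submodule.orthogonalProjectionOnto (Wᗮ ⊓ V) x).2)
  · intro v hv
    have hv1 : v - (Submodule.orthogonalProjectionOnto W v : EuclideanSpace ℂ ι) ∈ Wᗮ ⊓ V :=
      Submodule.mem_inf.2 ⟨Submodule.sub_starProjection_mem_orthogonal (K := W) v,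
        V.sub_mem hv (h (Submodule.orthogonalProjectionOnto W v).2)⟩
    set pWx := (Submodule.orthogonalProjectionOnto W x : EuclideanSpace ℂ ι)
    set pW'x := (Submodule.orthogonalProjectionOnto (Wᗮ ⊓ V) x : EuclideanSpace ℂ ι)
    set pWv := (Submodule.orthogonalProjectionOnto W v : EuclideanSpace ℂ ι)
    have z1 : ⟪x - pWx, pWv⟫ = 0 :=
      Submodule.starProjection_inner_eq_zero (K := W) x _ (Submodule.orthogonalProjectionOnto W v).2
    have z2 : ⟪pW'x, pWv⟫ = 0 :=
      (Submodule.mem_orthogonal' W pW'x).1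
        (Submodule.mem_inf.1 (Submodule.orthogonalProjectionOnto (Wᗮ ⊓ V) x).2).1 _
        (Submodule.orthogonalProjectionOnto W v).2
    have z3 : ⟪x - pW'x, v - pWv⟫ = 0 := Submodule.starProjection_inner_eq_zero (K := Wᗮ ⊓ V) x _ hv1
    have z4 : ⟪pWx, v - pWv⟫ = 0 :=
      (Submodule.mem_orthogonal W _).1 (Submodule.sub_starProjection_mem_orthogonal (K := W) v) _
        (Submodule.orthogonalProjectionOnto W x).2
    have expand : ⟪x - (pWx + pW'x), v⟫
        = (⟪x - pWx, pWv⟫ - ⟪pW'x, pWv⟫) + (⟪x - pW'x, v - pWv⟫ - ⟪pWx, v - pWv⟫) := by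
      simp only [inner_sub_left, inner_add_left, inner_sub_right, inner_add_right]
      ring
    rw [expand, z1, z2, z3, z4]; ring

lemma projL_add {ι : Type*} [Fintype ι]
    {W V : Submodule ℂ (EuclideanSpace ℂ ι)} (h : W ≤ V) :
    projL V = projL W + projL (Wᗮ ⊓ V) := by
  refine LinearMap.ext fun x => ?_
  simpa [projL_apply] using projL_decomp h x

lemma exists_minimal (E0 : Submodule ℂ (EuclideanSpace ℂ (Fin n → Fin d)))
    (hne : E0 ≠ ⊥) (hI : Inv n d E0) :
    ∃ W : Submodule ℂ (EuclideanSpace ℂ (Fin n → Fin d)), W ≤ E0 ∧ W ≠ ⊥ ∧ Inv n d W ∧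
      ∀ W' ≤ W, Inv n d W' → W' = ⊥ ∨ W' = W := by
  set S : Set ℕ := {k | ∃ W : Submodule ℂ (EuclideanSpace ℂ (Fin n → Fin d)),
    W ≤ E0 ∧ W ≠ ⊥ ∧ Inv n d W ∧ Module.finrank ℂ W = k} with hSdef
  have hS : S.Nonempty := ⟨_, E0, le_rfl, hne, hI, rfl⟩
  obtain ⟨W, hWE, hWne, hWI, hWrank⟩ := Nat.sInf_mem hS
  refine ⟨W, hWE, hWne, hWI, fun W' hW' hI' => ?_⟩
  by_cases hb : W' = ⊥
  · exact Or.inl hb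
  · right
    have h1 : Module.finrank ℂ W' ∈ S := ⟨W', hW'.trans hWE, hb, hI', rfl⟩
    have h2 : sInf S ≤ Module.finrank ℂ W' := Nat.sInf_le h1
    have h3 : Module.finrank ℂ W' ≤ Module.finrank ℂ W := Submodule.finrank_mono hW'
    exact Submodule.eq_of_le_of_finrank_eq hW' (le_antisymm h3 (hWrank ▸ h2))

lemma main (n d : ℕ) (T : EuclideanSpace ℂ (Fin n → Fin d) →ₗ[ℂ] EuclideanSpace ℂ (Fin n → Fin d))
    (hsym : T.IsSymmetric)
    (hpos : ∀ x : EuclideanSpace ℂ (Fin n → Fin d), 0 ≤ ⟪x, T x⟫)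
    (hcomm : ∀ U ∈ Matrix.unitaryGroup (Fin d) ℂ, ∀ x : EuclideanSpace ℂ (Fin n → Fin d),
      T (Matrix.toEuclideanLin (tensorPow n U) x) = Matrix.toEuclideanLin (tensorPow n U) (T x)) :
    ∀ (k : ℕ) (V : Submodule ℂ (EuclideanSpace ℂ (Fin n → Fin d))),
      Module.finrank ℂ V = k → Inv n d V → (∀ x ∈ V, T x ∈ V) →
    ∃ (m : ℕ) (r : Fin m → ℝ) (W : Fin m → Submodule ℂ (EuclideanSpace ℂ (Fin n → Fin d))),
      (∀ i, 0 ≤ r i) ∧ (∀ i, W i ≠ ⊥) ∧ (∀ i, Inv n d (W i)) ∧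
      (∀ i, ∀ W' ≤ W i, Inv n d W' → W' = ⊥ ∨ W' = W i) ∧
      T ∘ₗ projL V = ∑ i, (r i : ℂ) • projL (W i) := by
  intro k
  induction k using Nat.strong_induction_on with
  | _ k IH =>
  intro V hrank hVI hTV
  by_cases hbot : V = ⊥
  · refine ⟨0, Fin.elim0, Fin.elim0, fun i => i.elim0, fun i => i.elim0, fun i => i.elim0,
      fun i => i.elim0, ?_⟩
    subst hbot
    have hz : projL (⊥ : Submodule ℂ (EuclideanSpace ℂ (Fin n → Fin d))) = 0 := by
      refine LinearMap.ext fun x => ?_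
      rw [projL_apply, Submodule.orthogonalProjectionOnto_bot]
      simp
    rw [hz, LinearMap.comp_zero]
    simp
  · haveI : Nontrivial V := Submodule.nontrivial_iff_ne_bot.mpr hbot
    set f : Module.End ℂ V := T.restrict hTV with hf
    obtain ⟨μ, hμ⟩ := Module.End.exists_eigenvalue f
    obtain ⟨v, hv⟩ := hμ.exists_hasEigenvector
    have hv0 : (v : EuclideanSpace ℂ (Fin n → Fin d)) ≠ 0 :=
      fun h => hv.2 (Subtype.ext h)
    have hTv : T (v : EuclideanSpace ℂ (Fin n → Fin d)) = μ • (v : EuclideanSpace ℂ (Fin n → Fin d)) := by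
      have h1 := hv.apply_eq_smul
      calc T ↑v = ↑(f v) := (LinearMap.restrict_coe_apply _ _ _).symm
        _ = ↑(μ • v) := by rw [h1]
        _ = μ • (v : EuclideanSpace ℂ (Fin n → Fin d)) := rfl
    have hposv := hpos (v : EuclideanSpace ℂ (Fin n → Fin d))
    have hs0 : (0:ℝ) < ‖(v : EuclideanSpace ℂ (Fin n → Fin d))‖^2 :=
      pow_pos (norm_pos_iff.2 hv0) 2
    have hvv : (inner ℂ (v : EuclideanSpace ℂ (Fin n → Fin d)) (v : EuclideanSpace ℂ (Fin n → Fin d)) : ℂ)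
        = Complex.ofReal (‖(v : EuclideanSpace ℂ (Fin n → Fin d))‖^2) := by
      rw [inner_self_eq_norm_sq_to_K]
      norm_cast
    rw [hTv, inner_smul_right, hvv] at hposv
    have him : μ.im = 0 ∧ 0 ≤ μ.re := by
      rw [Complex.le_def] at hposv
      obtain ⟨h1, h2⟩ := hposv
      have e1 : (μ * Complex.ofReal (‖(v : EuclideanSpace ℂ (Fin n → Fin d))‖^2)).re
          = μ.re * ‖(v : EuclideanSpace ℂ (Fin n → Fin d))‖^2 := by
        simp [Complex.mul_re, ← Complex.ofReal_pow]
      have e2 : (μ * Complex.ofReal (‖(v : EuclideanSpace ℂ (Fin n → Fin d))‖^2)).im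
          = μ.im * ‖(v : EuclideanSpace ℂ (Fin n → Fin d))‖^2 := by
        simp [Complex.mul_im, ← Complex.ofReal_pow]
      rw [e1, Complex.zero_re] at h1
      rw [e2, Complex.zero_im] at h2
      constructor
      · rcases mul_eq_zero.1 h2.symm with h | h
        · exact h
        · exact absurd h (ne_of_gt hs0)
      · by_contra hneg
        push_neg at hneg
        have := mul_neg_of_neg_of_pos hneg hs0
        linarith
    set r0 : ℝ := μ.re with hr0
    have hμr : (r0 : ℂ) = μ := Complex.ext (by simp [hr0]) (by simp [him.1])
    set E0 : Submodule ℂ (EuclideanSpace ℂ (Fin n → Fin d)) :=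
      V ⊓ Module.End.eigenspace T μ with hE0
    have hE0ne : E0 ≠ ⊥ := by
      intro h
      have hmem : (v : EuclideanSpace ℂ (Fin n → Fin d)) ∈ E0 :=
        Submodule.mem_inf.2 ⟨v.2, Module.End.mem_eigenspace_iff.2 hTv⟩
      rw [h] at hmem
      exact hv0 ((Submodule.mem_bot ℂ).1 hmem)
    have hE0I : Inv n d E0 := by
      intro U hU x hx
      obtain ⟨hxV, hxE⟩ := Submodule.mem_inf.1 hx
      refine Submodule.mem_inf.2 ⟨hVI U hU x hxV, Module.End.mem_eigenspace_iff.2 ?_⟩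
      rw [hcomm U hU x, Module.End.mem_eigenspace_iff.1 hxE]
      exact _root_.map_smul _ μ x
    obtain ⟨W, hWE0, hWne, hWI, hWmin⟩ := exists_minimal E0 hE0ne hE0I
    have hWV : W ≤ V := hWE0.trans inf_le_left
    have hWeig : ∀ w ∈ W, T w = μ • w := fun w hw =>
      Module.End.mem_eigenspace_iff.1 (Submodule.mem_inf.1 (hWE0 hw)).2
    set V' : Submodule ℂ (EuclideanSpace ℂ (Fin n → Fin d)) := Wᗮ ⊓ V with hV'
    have hV'I : Inv n d V' := fun U hU x hx => Submodule.mem_inf.2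
      ⟨inv_orthogonal hWI U hU _ (Submodule.mem_inf.1 hx).1,
        hVI U hU _ (Submodule.mem_inf.1 hx).2⟩
    have hTV' : ∀ x ∈ V', T x ∈ V' := by
      intro x hx
      obtain ⟨hx1, hx2⟩ := Submodule.mem_inf.1 hx
      refine Submodule.mem_inf.2 ⟨?_, hTV x hx2⟩
      rw [Submodule.mem_orthogonal]
      intro w hw
      have hsw : ⟪T w, x⟫ = ⟪w, T x⟫ := hsym w x
      rw [← hsw, hWeig w hw, inner_smul_left,
        (Submodule.mem_orthogonal W x).1 hx1 w hw, mul_zero]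
    have hlt : V' < V := by
      refine lt_of_le_of_ne inf_le_right ?_
      intro h
      apply hWne
      have hWW' : W ≤ Wᗮ := fun w hw => (Submodule.mem_inf.1 (h.ge (hWV hw))).1
      have : W ≤ ⊥ := (Submodule.orthogonal_disjoint W) le_rfl hWW'
      exact le_bot_iff.1 this
    have hrank' : Module.finrank ℂ V' < k := hrank ▸ Submodule.finrank_lt_finrank_of_lt hlt
    obtain ⟨m, r, Ws, h1, h2, h3, h4, h5⟩ := IH _ hrank' V' rfl hV'I hTV'
    refine ⟨m + 1, Fin.cons r0 r, Fin.cons W Ws, ?_, ?_, ?_, ?_, ?_⟩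
    · intro i
      refine Fin.cases ?_ ?_ i
      · exact him.2
      · exact h1
    · intro i
      refine Fin.cases ?_ ?_ i
      · exact hWne
      · exact h2
    · intro i
      refine Fin.cases ?_ ?_ i
      · exact hWI
      · exact h3
    · intro i
      refine Fin.cases ?_ ?_ i
      · exact hWmin
      · exact h4
    · have hdec : projL V = projL W + projL V' := projL_add hWV
      have hTW : T ∘ₗ projL W = μ • projL W := by
        refine LinearMap.ext fun x => ?_
        simp only [LinearMap.comp_apply, LinearMap.smul_apply]
        exact hWeig _ (projL_mem W x)
      calc T ∘ₗ projL V = T ∘ₗ projL W + T ∘ₗ projL V' := by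
            rw [hdec, LinearMap.comp_add]
        _ = (r0 : ℂ) • projL W + ∑ i, (r i : ℂ) • projL (Ws i) := by rw [hTW, h5, ← hμr]
        _ = ∑ i, (((Fin.cons r0 r : Fin (m+1) → ℝ) i : ℝ) : ℂ)
              • projL ((Fin.cons W Ws : Fin (m+1)
                  → Submodule ℂ (EuclideanSpace ℂ (Fin n → Fin d))) i) := by
            simp [Fin.sum_univ_succ]

end WernerAux

open WernerAux

/-- **Werner state characterisation.** Every unitarily invariant state on `(ℂ^d)^{⊗n}`
is a nonnegative combination of orthogonal projectors onto minimal subspaces invariant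
under all `U^{⊗n}`, i.e. onto unitary irreps. -/
theorem werner_state_characterisation (n d : ℕ) (hn : 1 ≤ n) (hd : 1 ≤ d)
    (ρ : Matrix (Fin n → Fin d) (Fin n → Fin d) ℂ)
    (hpsd : ρ.PosSemidef) (htr : ρ.trace = 1)
    (hinv : ∀ U ∈ Matrix.unitaryGroup (Fin d) ℂ,
      tensorPow n U * ρ * (tensorPow n U)ᴴ = ρ) :
    ∃ (ι : Type) (_ : Fintype ι) (r : ι → ℝ)
      (W : ι → Submodule ℂ (EuclideanSpace ℂ (Fin n → Fin d))),
      (∀ i, 0 ≤ r i) ∧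
      (∀ i, W i ≠ ⊥) ∧
      (∀ i, ∀ U ∈ Matrix.unitaryGroup (Fin d) ℂ,
        ∀ x ∈ W i, Matrix.toEuclideanLin (tensorPow n U) x ∈ W i) ∧
      (∀ i, ∀ W' : Submodule ℂ (EuclideanSpace ℂ (Fin n → Fin d)), W' ≤ W i →
        (∀ U ∈ Matrix.unitaryGroup (Fin d) ℂ,
          ∀ x ∈ W', Matrix.toEuclideanLin (tensorPow n U) x ∈ W') →
        W' = ⊥ ∨ W' = W i) ∧
      ρ = ∑ i, (r i : ℂ) • projMatrix (W i) := by
  set T := Matrix.toEuclideanLin ρ with hT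
  have hadj : LinearMap.adjoint T = T := by
    rw [hT, ← Matrix.toEuclideanLin_conjTranspose_eq_adjoint, hpsd.1]
  have hsym : T.IsSymmetric :=
    (LinearMap.isSymmetric_iff_isSelfAdjoint T).2 (LinearMap.isSelfAdjoint_iff'.2 hadj)
  have hpos : ∀ x : EuclideanSpace ℂ (Fin n → Fin d), 0 ≤ inner (𝕜 := ℂ) x (T x) := by
    intro x
    have h2 := hpsd.dotProduct_mulVec_nonneg (WithLp.ofLp x)
    rw [EuclideanSpace.inner_eq_star_dotProduct, dotProduct_comm]
    exact h2
  have hcomm : ∀ U ∈ Matrix.unitaryGroup (Fin d) ℂ, ∀ x : EuclideanSpace ℂ (Fin n → Fin d),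
      T (Matrix.toEuclideanLin (tensorPow n U) x) = Matrix.toEuclideanLin (tensorPow n U) (T x) := by
    intro U hU x
    have h0 : Uᴴ * U = 1 := by
      rw [← Matrix.star_eq_conjTranspose]
      exact (Unitary.mem_iff.mp hU).1
    have h1 : (tensorPow n U)ᴴ * tensorPow n U = 1 := by
      rw [tensorPow_conjTranspose, ← tensorPow_mul, h0, tensorPow_one]
    have h2 : ρ * tensorPow n U = tensorPow n U * ρ := by
      calc ρ * tensorPow n U
          = (tensorPow n U * ρ * (tensorPow n U)ᴴ) * tensorPow n U := by rw [hinv U hU]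
        _ = tensorPow n U * ρ * ((tensorPow n U)ᴴ * tensorPow n U) := Matrix.mul_assoc _ _ _
        _ = tensorPow n U * ρ := by rw [h1, Matrix.mul_one]
    have h3 := congrArg Matrix.toEuclideanLin h2
    rw [toEuclideanLin_mul, toEuclideanLin_mul] at h3
    exact LinearMap.congr_fun h3 x
  have hinvTop : Inv n d ⊤ := fun U hU x _ => Submodule.mem_top
  obtain ⟨m, r, Ws, h1, h2, h3, h4, h5⟩ :=
    main n d T hsym hpos hcomm (Module.finrank ℂ (⊤ : Submodule ℂ (EuclideanSpace ℂ (Fin n → Fin d))))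
      ⊤ rfl hinvTop (fun x _ => Submodule.mem_top)
  have hTop : projL (⊤ : Submodule ℂ (EuclideanSpace ℂ (Fin n → Fin d))) = LinearMap.id := by
    refine LinearMap.ext fun x => ?_
    simpa [projL_apply] using (Submodule.starProjection_eq_self_iff (K := (⊤ : Submodule ℂ (EuclideanSpace ℂ (Fin n → Fin d))))).mpr (Submodule.mem_top (x := x))
  have hTsum : T = ∑ i, (r i : ℂ) • projL (Ws i) := by
    rw [← h5, hTop, LinearMap.comp_id]
  refine ⟨Fin m, inferInstance, r, Ws, h1, h2, h3,
    fun i W' hle hinv' => h4 i W' hle hinv', ?_⟩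
  apply Matrix.toEuclideanLin.injective
  rw [map_sum]
  have : ∀ i, Matrix.toEuclideanLin ((r i : ℂ) • projMatrix (Ws i)) = (r i : ℂ) • projL (Ws i) := by
    intro i
    rw [_root_.map_smul]
    congr 1
    exact Matrix.toEuclideanLin.apply_symm_apply _
  simp_rw [this]
  exact hTsum
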